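/- arXiv:2311.06926 — 5 statements merged into one kernel-verified Lean document; each statement's English description precedes it below -/
import Mathlib

section
/- If P₀ = P₀⁻¹Ã (with P₀ := 𝒫₀⁻¹Ã diagonalizable) has spectrum contained in (0,2), then for every k ≥ 1 the matrix P_k := 𝒫_k⁻¹Ã, defined via the recursion 𝒫_{k+1}⁻¹ = 2𝒫_k⁻¹ − 𝒫_k⁻¹ Ã 𝒫_k⁻¹, has spectrum contained in (0,1]. -/
open Matrix

private lemma g_mem_Ioc {x : ℝ} (hx : x ∈ Set.Ioo (0:ℝ) 2) :
    2 * x - x * x ∈ Set.Ioc (0:ℝ) 1 := by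
  obtain ⟨h1, h2⟩ := hx
  constructor
  · nlinarith
  · nlinarith [sq_nonneg (x - 1)]

/-- If `P₀ = 𝒫₀⁻¹At` is diagonalizable with spectrum in (0,2), then for every `k ≥ 1`
the matrix `P_k = 𝒫_k⁻¹At`, generated by `𝒫_{k+1}⁻¹ = 2𝒫_k⁻¹ − 𝒫_k⁻¹ At 𝒫_k⁻¹`,
has spectrum contained in (0,1]. -/
theorem hyperpower_spectrum_Ioc {N : ℕ}
    (P0 At : Matrix (Fin N) (Fin N) ℝ) (hP0 : P0.PosDef)
    (Pinv : ℕ → Matrix (Fin N) (Fin N) ℝ)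
    (h0 : Pinv 0 = P0⁻¹)
    (hrec : ∀ k, Pinv (k + 1) = 2 • Pinv k - Pinv k * At * Pinv k)
    (hdiag : ∃ (U D : Matrix (Fin N) (Fin N) ℝ),
      IsUnit U ∧ D.IsDiag ∧ Pinv 0 * At = U * D * U⁻¹)
    (hspec : spectrum ℝ (Pinv 0 * At) ⊆ Set.Ioo (0 : ℝ) 2) :
    ∀ k ≥ 1, spectrum ℝ (Pinv k * At) ⊆ Set.Ioc (0 : ℝ) 1 := by
  obtain ⟨U, D, hU, hD, hfact⟩ := hdiag
  set g : ℝ → ℝ := fun x => 2 * x - x * x with hg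
  set d : Fin N → ℝ := D.diag with hd
  have hinv : U⁻¹ * U = 1 := nonsing_inv_mul U ((isUnit_iff_isUnit_det U).mp hU)
  -- the key conjugation identity, by induction on k
  have key : ∀ k, Pinv k * At = U * diagonal (fun i => g^[k] (d i)) * U⁻¹ := by
    intro k
    induction k with
    | zero =>
      rw [show (fun i => g^[0] (d i)) = D.diag from rfl, hD.diagonal_diag]
      exact hfact
    | succ k ih =>
      have hPA : Pinv (k + 1) * At
          = 2 • (Pinv k * At) - (Pinv k * At) * (Pinv k * At) := by
        rw [hrec k]
        simp [sub_mul, smul_mul_assoc, mul_assoc]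
      rw [hPA, ih]
      have hsq : (U * diagonal (fun i => g^[k] (d i)) * U⁻¹) *
          (U * diagonal (fun i => g^[k] (d i)) * U⁻¹)
          = U * (diagonal (fun i => g^[k] (d i)) * diagonal (fun i => g^[k] (d i))) * U⁻¹ := by
        calc (U * diagonal (fun i => g^[k] (d i)) * U⁻¹) *
            (U * diagonal (fun i => g^[k] (d i)) * U⁻¹)
            = U * diagonal (fun i => g^[k] (d i)) * (U⁻¹ * U) *
              diagonal (fun i => g^[k] (d i)) * U⁻¹ := by
              simp only [mul_assoc]
          _ = _ := by rw [hinv]; simp only [mul_one, mul_assoc]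
      rw [hsq, diagonal_mul_diagonal]
      have h2 : (2 : ℕ) • (U * diagonal (fun i => g^[k] (d i)) * U⁻¹)
          = U * ((2:ℕ) • diagonal (fun i => g^[k] (d i))) * U⁻¹ := by
        simp only [mul_smul_comm, smul_mul_assoc]
      rw [h2, ← Matrix.sub_mul, ← Matrix.mul_sub]
      congr 1
      congr 1
      ext i j
      rcases eq_or_ne i j with rfl | h
      · simp [hg, Function.iterate_succ_apply', two_smul]
        ring
      · simp only [Matrix.sub_apply, Matrix.smul_apply, Matrix.diagonal_apply_ne _ h,
          smul_zero, sub_zero]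
  -- all iterates stay in (0,2)
  have hdm : ∀ i, d i ∈ Set.Ioo (0:ℝ) 2 := by
    intro i
    apply hspec
    rw [key 0]
    rw [show U * diagonal (fun i => g^[0] (d i)) * U⁻¹ = ↑hU.unit * diagonal d * ↑hU.unit⁻¹ by
      simp [Matrix.coe_units_inv, IsUnit.unit_spec]]
    rw [spectrum.units_conjugate, spectrum_diagonal]
    exact ⟨i, rfl⟩
  have hiter : ∀ k i, g^[k] (d i) ∈ Set.Ioo (0:ℝ) 2 := by
    intro k
    induction k with
    | zero => simpa using hdm
    | succ k ih =>
      intro i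
      have := g_mem_Ioc (ih i)
      rw [Function.iterate_succ_apply']
      exact ⟨this.1, lt_of_le_of_lt this.2 one_lt_two⟩
  intro k hk
  obtain ⟨m, rfl⟩ := Nat.exists_eq_add_of_le hk
  intro μ hμ
  rw [key (1 + m)] at hμ
  rw [show U * diagonal (fun i => g^[1 + m] (d i)) * U⁻¹
      = ↑hU.unit * diagonal (fun i => g^[1 + m] (d i)) * ↑hU.unit⁻¹ by
    simp [Matrix.coe_units_inv, IsUnit.unit_spec]] at hμ
  rw [spectrum.units_conjugate, spectrum_diagonal] at hμ
  obtain ⟨i, rfl⟩ := hμ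
  simp only [show 1 + m = m + 1 from by omega, Function.iterate_succ_apply']
  exact g_mem_Ioc (hiter m i)
end

section
/- Under the recursion 𝒫_{k+1}⁻¹ = 2𝒫_k⁻¹ − 𝒫_k⁻¹ Ã 𝒫_k⁻¹, the spectrum of P_{k+1} := 𝒫_{k+1}⁻¹Ã is the image of the spectrum of P_k := 𝒫_k⁻¹Ã under the map l(λ) = 2λ − λ², i.e. σ(P_{k+1}) = { 2λ − λ² : λ ∈ σ(P_k) }. -/
open Matrix

/-- Under the recursion `𝒫_{k+1}⁻¹ = 2𝒫_k⁻¹ − 𝒫_k⁻¹ Ã 𝒫_k⁻¹`, the spectrum of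
`P_{k+1} = 𝒫_{k+1}⁻¹Ã` is the image of the spectrum of `P_k` under `l(λ) = 2λ − λ²`. -/
theorem hyperpower_spectrum_image {N : ℕ}
    (P0 At : Matrix (Fin N) (Fin N) ℝ) (hP0 : IsUnit P0)
    (Pinv : ℕ → Matrix (Fin N) (Fin N) ℝ)
    (h0 : Pinv 0 = P0⁻¹)
    (hrec : ∀ k, Pinv (k + 1) = 2 • Pinv k - Pinv k * At * Pinv k)
    (hdiag : ∃ (U D : Matrix (Fin N) (Fin N) ℝ),
      IsUnit U ∧ D.IsDiag ∧ Pinv 0 * At = U * D * U⁻¹) :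
    ∀ k, spectrum ℝ (Pinv (k + 1) * At) =
      (fun lam : ℝ => 2 * lam - lam ^ 2) '' spectrum ℝ (Pinv k * At) := by
  obtain ⟨U, D, hU, hD, hUD⟩ := hdiag
  obtain ⟨u, rfl⟩ := hU
  set V : Matrix (Fin N) (Fin N) ℝ := ↑u with hV
  set W : Matrix (Fin N) (Fin N) ℝ := ↑u⁻¹ with hW
  have hWV : W * V = 1 := u.inv_mul
  have hVW : ∀ d : Fin N → ℝ,
      (V * diagonal d * W) * (V * diagonal d * W)
        = V * diagonal (d * d) * W := by
    intro d
    have h1 : ∀ X : Matrix (Fin N) (Fin N) ℝ, W * (V * X) = X := fun X => by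
      rw [← Matrix.mul_assoc, hWV, Matrix.one_mul]
    have hdd : diagonal d * diagonal d = diagonal (d * d) := by
      ext i j; by_cases h : i = j <;> simp [h]
    rw [← hdd]
    simp only [Matrix.mul_assoc]
    rw [h1]
  have hstep : ∀ d : Fin N → ℝ,
      2 • (V * diagonal d * W) - (V * diagonal d * W) * (V * diagonal d * W)
        = V * diagonal (fun i => 2 * d i - d i ^ 2) * W := by
    intro d
    rw [hVW]
    have hdiagonal : diagonal (fun i => 2 * d i - d i ^ 2)
        = 2 • diagonal d - diagonal (d * d) := by
      ext i j
      by_cases h : i = j <;>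
        simp [h, diagonal, Matrix.sub_apply, Matrix.smul_apply, Pi.mul_apply, sq, mul_comm]
    rw [hdiagonal, Matrix.mul_sub, Matrix.sub_mul, Matrix.mul_smul, Matrix.smul_mul]
  have key : ∀ k, ∃ d : Fin N → ℝ, Pinv k * At = V * diagonal d * W := by
    intro k
    induction k with
    | zero =>
      refine ⟨D.diag, ?_⟩
      rw [hUD, hD.diagonal_diag, hW, Matrix.coe_units_inv]
    | succ k ih =>
      obtain ⟨d, hd⟩ := ih
      refine ⟨fun i => 2 * d i - d i ^ 2, ?_⟩
      have h2 : Pinv (k+1) * At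
          = 2 • (Pinv k * At) - (Pinv k * At) * (Pinv k * At) := by
        rw [hrec k]; noncomm_ring
      rw [h2, hd, hstep]
  intro k
  obtain ⟨d, hd⟩ := key k
  have h2 : Pinv (k+1) * At
      = 2 • (Pinv k * At) - (Pinv k * At) * (Pinv k * At) := by
    rw [hrec k]; noncomm_ring
  have hsucc : Pinv (k+1) * At
      = V * diagonal (fun i => 2 * d i - d i ^ 2) * W := by
    rw [h2, hd, hstep]
  have hconj : ∀ e : Fin N → ℝ,
      spectrum ℝ (V * diagonal e * W) = Set.range e := by
    intro e
    rw [hV, hW, spectrum.units_conjugate, spectrum_diagonal]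
  rw [hsucc, hd, hconj, hconj]
  ext x
  constructor
  · rintro ⟨y, rfl⟩
    exact ⟨d y, ⟨y, rfl⟩, rfl⟩
  · rintro ⟨a, ⟨y, rfl⟩, rfl⟩
    exact ⟨y, rfl⟩
end

section
/- If 0 < λ_min ≤ λ_max ≤ 1 with λ_min < λ_max, and λ'_min = l(λ_min), λ'_max = l(λ_max) with l(λ) = 2λ − λ², then 1 < λ'_max/λ'_min < λ_max/λ_min; that is, the condition number κ(P_k) = λ_{k,max}/λ_{k,min} strictly decreases under each hyper-power update while remaining greater than 1. -/
/-- The condition number strictly decreases under a hyper-power update while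
staying above 1: if `0 < λmin < λmax ≤ 1` and `l(λ) = 2λ − λ²`, then
`1 < l(λmax)/l(λmin) < λmax/λmin`. -/
theorem condition_number_decreases
    (lmin lmax : ℝ) (h0 : 0 < lmin) (hlt : lmin < lmax) (h1 : lmax ≤ 1) :
    1 < (2 * lmax - lmax ^ 2) / (2 * lmin - lmin ^ 2) ∧
    (2 * lmax - lmax ^ 2) / (2 * lmin - lmin ^ 2) < lmax / lmin := by
  have hdmin : 0 < 2 * lmin - lmin ^ 2 := by nlinarith
  constructor
  · rw [one_lt_div hdmin]
    nlinarith
  · rw [div_lt_div_iff₀ hdmin h0]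
    nlinarith [mul_pos (mul_pos h0 (h0.trans hlt)) (sub_pos.mpr hlt)]
end

section
/- Let M_k = L_k L_kᵀ be Cholesky factorizations of symmetric positive definite matrices M₁,…,M_d and define the generalized Kronecker sum A₁ ⊕̂ ⋯ ⊕̂ A_d := ∑_k M_d ⊗ ⋯ ⊗ A_k ⊗ ⋯ ⊗ M₁. Then with L = L_d ⊗ ⋯ ⊗ L₁, one has L⁻¹ (A₁ ⊕̂ ⋯ ⊕̂ A_d) L⁻ᵀ = Ã₁ ⊕ ⋯ ⊕ Ã_d, where Ã_k = L_k⁻¹ A_k L_k⁻ᵀ; i.e. a generalized Kronecker sum is congruent to an ordinary Kronecker sum. -/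
open Matrix

/-- The Kronecker product of a family of square matrices on the product index type. -/
def kronFamily {d : ℕ} {n : Fin d → ℕ}
    (A : ∀ k, Matrix (Fin (n k)) (Fin (n k)) ℝ) :
    Matrix (∀ k, Fin (n k)) (∀ k, Fin (n k)) ℝ :=
  fun i j => ∏ k, A k (i k) (j k)

/-- Ordinary Kronecker sum: `A k` in slot `k`, identities elsewhere. -/
def kronSum {d : ℕ} {n : Fin d → ℕ}
    (A : ∀ k, Matrix (Fin (n k)) (Fin (n k)) ℝ) :
    Matrix (∀ k, Fin (n k)) (∀ k, Fin (n k)) ℝ :=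
  ∑ k, kronFamily (fun l => if l = k then A l else (1 : Matrix (Fin (n l)) (Fin (n l)) ℝ))

/-- Generalized Kronecker sum: `A k` in slot `k`, the matrices `M` elsewhere. -/
def genKronSum {d : ℕ} {n : Fin d → ℕ}
    (A M : ∀ k, Matrix (Fin (n k)) (Fin (n k)) ℝ) :
    Matrix (∀ k, Fin (n k)) (∀ k, Fin (n k)) ℝ :=
  ∑ k, kronFamily (fun l => if l = k then A l else M l)

lemma kronFamily_mul {d : ℕ} {n : Fin d → ℕ}
    (A B : ∀ k, Matrix (Fin (n k)) (Fin (n k)) ℝ) :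
    kronFamily A * kronFamily B = kronFamily (fun k => A k * B k) := by
  ext i l
  simp only [kronFamily, Matrix.mul_apply]
  rw [Finset.prod_univ_sum]
  congr 1
  ext j
  rw [Finset.prod_mul_distrib]

/-- A generalized Kronecker sum built with SPD matrices `M_k = L_k L_kᵀ` is congruent,
via `L = L_d ⊗ ⋯ ⊗ L₁`, to the ordinary Kronecker sum of `Ã_k = L_k⁻¹ A_k L_k⁻ᵀ`. -/
theorem genKronSum_congruent {d : ℕ} {n : Fin d → ℕ}
    (A M L : ∀ k, Matrix (Fin (n k)) (Fin (n k)) ℝ)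
    (hM : ∀ k, (M k).PosDef)
    (hL : ∀ k, M k = L k * (L k)ᵀ)
    (hLtri : ∀ k, ∀ i j : Fin (n k), i < j → L k i j = 0) :
    kronFamily (fun k => (L k)⁻¹) * genKronSum A M *
        kronFamily (fun k => ((L k)⁻¹)ᵀ) =
      kronSum (fun k => (L k)⁻¹ * A k * ((L k)⁻¹)ᵀ) := by
  have hunit : ∀ k, IsUnit (L k).det := by
    intro k
    have hdet : (M k).det = (L k).det * (L k).det := by
      rw [hL k, Matrix.det_mul, Matrix.det_transpose]
    have h0 : (M k).det ≠ 0 := ne_of_gt (hM k).det_pos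
    refine isUnit_iff_ne_zero.mpr fun h => h0 ?_
    rw [hdet, h, mul_zero]
  unfold genKronSum kronSum
  rw [Finset.mul_sum, Finset.sum_mul]
  refine Finset.sum_congr rfl fun k _ => ?_
  rw [kronFamily_mul, kronFamily_mul]
  refine congrArg kronFamily (funext fun l => ?_)
  by_cases h : l = k
  · simp [h]
  · simp only [if_neg h, hL l, Matrix.transpose_nonsing_inv]
    rw [show (L l)⁻¹ * (L l * (L l)ᵀ) * ((L l)ᵀ)⁻¹
        = ((L l)⁻¹ * L l) * ((L l)ᵀ * ((L l)ᵀ)⁻¹) by simp only [Matrix.mul_assoc],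
      Matrix.nonsing_inv_mul _ (hunit l),
      Matrix.mul_nonsing_inv _ (by rw [Matrix.det_transpose]; exact hunit l)]
    simp
end

section
/- Suppose 𝒫₀ is positive definite, Ã positive definite, and σ(𝒫₀⁻¹Ã) ⊂ (0,2). Then along the hyper-power preconditioner sequence, λ_{k+1,min} = l(λ_{k,min}) for k ≥ 1 and the sequence λ_{k,min} (k ≥ 1) is strictly increasing and converges to 1, where l(λ) = 2λ − λ² and λ_{k,min} denotes the smallest eigenvalue of 𝒫_k⁻¹Ã. -/
open Matrix Filter

variable {N : ℕ}

private lemma hp_mem_spectrum_iff (A : Matrix (Fin N) (Fin N) ℝ) (μ : ℝ) :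
    μ ∈ spectrum ℝ A ↔ (μ • (1 : Matrix (Fin N) (Fin N) ℝ) - A).det = 0 := by
  rw [spectrum.mem_iff, Algebra.algebraMap_eq_smul_one, Matrix.isUnit_iff_isUnit_det,
    isUnit_iff_ne_zero, not_ne_iff]

private lemma hp_fact (M : Matrix (Fin N) (Fin N) ℝ) (μ : ℝ) :
    (2*μ - μ^2) • (1 : Matrix (Fin N) (Fin N) ℝ) - (M + M - M*M)
      = (M - μ • 1) * (M - (2-μ) • 1) := by
  simp only [sub_mul, mul_sub, smul_mul_assoc, mul_smul_comm, smul_smul, one_mul, mul_one]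
  module

private lemma hp_adj (P At : Matrix (Fin N) (Fin N) ℝ) (hP : Pᵀ = P) (hA : Atᵀ = At)
    (x y : Fin N → ℝ) :
    ((P * At) *ᵥ x) ⬝ᵥ (At *ᵥ y) = x ⬝ᵥ (At *ᵥ ((P * At) *ᵥ y)) := by
  simp only [Matrix.dotProduct_mulVec, Matrix.vecMul_mulVec, Matrix.vecMul_vecMul]
  rw [Matrix.transpose_mul, hP, hA, Matrix.mul_assoc]

private lemma hp_le_one (P At : Matrix (Fin N) (Fin N) ℝ) (hP : Pᵀ = P) (hAt : At.PosDef)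
    {ν : ℝ} (hν : ν ∈ spectrum ℝ (P*At + P*At - (P*At)*(P*At))) : ν ≤ 1 := by
  classical
  set M := P * At with hM
  have hA : Atᵀ = At := by
    have := hAt.1
    rwa [Matrix.IsHermitian, Matrix.conjTranspose_eq_transpose_of_trivial] at this
  have hadj : ∀ x y, (M *ᵥ x) ⬝ᵥ (At *ᵥ y) = x ⬝ᵥ (At *ᵥ (M *ᵥ y)) :=
    fun x y => hp_adj P At hP hA x y
  have hdet : (ν • (1 : Matrix (Fin N) (Fin N) ℝ) - (M + M - M*M)).det = 0 :=
    (hp_mem_spectrum_iff _ _).1 hν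
  obtain ⟨v, hv0, hv⟩ := (Matrix.exists_mulVec_eq_zero_iff).2 hdet
  have hv' : M *ᵥ (M *ᵥ v) = M *ᵥ v + M *ᵥ v - ν • v := by
    simp only [Matrix.sub_mulVec, Matrix.add_mulVec, Matrix.smul_mulVec,
      Matrix.one_mulVec, ← Matrix.mulVec_mulVec, sub_eq_zero] at hv
    rw [hv]; abel
  set w : Fin N → ℝ := M *ᵥ v - v with hw
  have hMw : M *ᵥ w - w = (1 - ν) • v := by
    rw [hw, Matrix.mulVec_sub, hv', sub_smul, one_smul]; abel
  have key : w ⬝ᵥ (At *ᵥ w) = (1 - ν) * (v ⬝ᵥ (At *ᵥ v)) := by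
    have h2 : v ⬝ᵥ (At *ᵥ (M *ᵥ w - w)) = w ⬝ᵥ (At *ᵥ w) := by
      rw [Matrix.mulVec_sub, dotProduct_sub, ← hadj v w, ← sub_dotProduct, ← hw]
    rw [← h2, hMw, Matrix.mulVec_smul, dotProduct_smul, smul_eq_mul]
  have hq : 0 ≤ w ⬝ᵥ (At *ᵥ w) := by simpa using hAt.posSemidef.dotProduct_mulVec_nonneg w
  have hvpos : 0 < v ⬝ᵥ (At *ᵥ v) := by simpa using hAt.dotProduct_mulVec_pos hv0
  nlinarith [key, hq, hvpos]

private lemma hp_detswap (A B : Matrix (Fin N) (Fin N) ℝ) :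
    (A - B).det = 0 ↔ (B - A).det = 0 := by
  rw [← neg_sub B A, Matrix.det_neg]
  simp

private lemma hp_forward (M : Matrix (Fin N) (Fin N) ℝ) {μ : ℝ} (hμ : μ ∈ spectrum ℝ M) :
    (2*μ - μ^2) ∈ spectrum ℝ (M + M - M*M) := by
  rw [hp_mem_spectrum_iff] at hμ ⊢
  rw [hp_fact, Matrix.det_mul, (hp_detswap _ _).2 hμ, zero_mul]

private lemma hp_backward (M : Matrix (Fin N) (Fin N) ℝ) {ν : ℝ}
    (hν : ν ∈ spectrum ℝ (M + M - M*M)) (h : ν ≤ 1) :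
    ∃ μ ∈ spectrum ℝ M, 2*μ - μ^2 = ν := by
  set s := Real.sqrt (1-ν) with hsdef
  have hs : s^2 = 1-ν := Real.sq_sqrt (by linarith)
  have hν1 : ν = 2*(1-s) - (1-s)^2 := by nlinarith [hs]
  have hν2 : ν = 2*(1+s) - (1+s)^2 := by nlinarith [hs]
  rw [hp_mem_spectrum_iff, hν1, hp_fact, Matrix.det_mul] at hν
  rcases mul_eq_zero.1 hν with hz | hz
  · exact ⟨1-s, (hp_mem_spectrum_iff _ _).2 ((hp_detswap _ _).1 hz), hν1.symm⟩
  · refine ⟨1+s, (hp_mem_spectrum_iff _ _).2 ((hp_detswap _ _).1 ?_), hν2.symm⟩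
    convert hz using 3
    ring_nf

/-- Along the hyper-power preconditioner sequence (with `𝒫₀`, `Ã` SPD and
`σ(𝒫₀⁻¹Ã) ⊂ (0,2)`), the smallest eigenvalue satisfies
`λ_{k+1,min} = l(λ_{k,min})` for `k ≥ 1`, and the sequence `λ_{k,min}` (`k ≥ 1`)
is strictly increasing and converges to 1, where `l(λ) = 2λ − λ²`. -/
theorem hyperpower_min_eigenvalue {N : ℕ}
    (P0 At : Matrix (Fin N) (Fin N) ℝ) (hP0 : P0.PosDef) (hAt : At.PosDef)
    (Pinv : ℕ → Matrix (Fin N) (Fin N) ℝ)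
    (h0 : Pinv 0 = P0⁻¹)
    (hrec : ∀ k, Pinv (k + 1) = 2 • Pinv k - Pinv k * At * Pinv k)
    (hspec : spectrum ℝ (Pinv 0 * At) ⊆ Set.Ioo (0 : ℝ) 2)
    (lmin : ℕ → ℝ)
    (hmem : ∀ k, lmin k ∈ spectrum ℝ (Pinv k * At))
    (hmin : ∀ k, ∀ μ ∈ spectrum ℝ (Pinv k * At), lmin k ≤ μ)
    (h1 : lmin 1 < 1) :
    (∀ k ≥ 1, lmin (k + 1) = 2 * lmin k - lmin k ^ 2) ∧
    (∀ k ≥ 1, lmin k < lmin (k + 1)) ∧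
    Tendsto lmin atTop (nhds 1) := by
  classical
  have hA : Atᵀ = At := by
    have := hAt.1
    rwa [Matrix.IsHermitian, Matrix.conjTranspose_eq_transpose_of_trivial] at this
  have hsym : ∀ k, (Pinv k)ᵀ = Pinv k := by
    intro k
    induction k with
    | zero =>
      rw [h0, Matrix.transpose_nonsing_inv]
      congr 1
      have := hP0.1
      rwa [Matrix.IsHermitian, Matrix.conjTranspose_eq_transpose_of_trivial] at this
    | succ k ih =>
      rw [hrec k, Matrix.transpose_sub, Matrix.transpose_smul, Matrix.transpose_mul,
        Matrix.transpose_mul, hA, ih]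
      rw [Matrix.mul_assoc]
  have hrecM : ∀ k, Pinv (k+1) * At
      = Pinv k * At + Pinv k * At - (Pinv k * At) * (Pinv k * At) := by
    intro k
    rw [hrec k, two_smul, sub_mul, add_mul]
    rw [Matrix.mul_assoc (Pinv k * At) (Pinv k) At]
  have hle1 : ∀ k, ∀ ν ∈ spectrum ℝ (Pinv (k+1) * At), ν ≤ 1 := by
    intro k ν hν
    exact hp_le_one (Pinv k) At (hsym k) hAt (by rwa [← hrecM k])
  have hrecEq : ∀ k ≥ 1, lmin (k + 1) = 2 * lmin k - lmin k ^ 2 := by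
    intro k hk
    cases k with
    | zero => omega
    | succ j =>
      set k := j + 1
      have hub : lmin (k+1) ≤ 2 * lmin k - lmin k ^ 2 := by
        apply hmin (k+1)
        rw [hrecM k]
        exact hp_forward _ (hmem k)
      have hν' : lmin (k+1) ∈ spectrum ℝ
          (Pinv k * At + Pinv k * At - (Pinv k * At) * (Pinv k * At)) := by
        rw [← hrecM k]; exact hmem (k+1)
      obtain ⟨μ, hμmem, hμeq⟩ := hp_backward _ hν' (hle1 k _ (hmem (k+1)))
      have hμle1 : μ ≤ 1 := hle1 j μ hμmem
      have halmin : lmin k ≤ μ := hmin k μ hμmem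
      nlinarith [hμeq, hμle1, halmin]
  have hpos1 : 0 < lmin 1 := by
    have hν' : lmin 1 ∈ spectrum ℝ
        (Pinv 0 * At + Pinv 0 * At - (Pinv 0 * At) * (Pinv 0 * At)) := by
      rw [← hrecM 0]; exact hmem 1
    obtain ⟨μ, hμmem, hμeq⟩ := hp_backward _ hν' (hle1 0 _ (hmem 1))
    obtain ⟨hμ0, hμ2⟩ := hspec hμmem
    nlinarith [hμeq]
  have hbounds : ∀ k ≥ 1, 0 < lmin k ∧ lmin k < 1 := by
    intro k hk
    induction k, hk using Nat.le_induction with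
    | base => exact ⟨hpos1, h1⟩
    | succ k hk ih =>
      rw [hrecEq k hk]
      constructor <;> nlinarith [ih.1, ih.2]
  refine ⟨hrecEq, ?_, ?_⟩
  · intro k hk
    rw [hrecEq k hk]
    nlinarith [(hbounds k hk).1, (hbounds k hk).2]
  · have hgeom : ∀ n, 1 - lmin (n+1) = (1 - lmin 1) ^ (2^n) := by
      intro n
      induction n with
      | zero => simp
      | succ n ih =>
        have h2 : 1 - lmin (n+1+1) = (1 - lmin (n+1))^2 := by
          rw [hrecEq (n+1) (Nat.le_add_left 1 n)]; ring
        rw [h2, ih, ← pow_mul, ← pow_succ]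
    set r : ℝ := 1 - lmin 1 with hrdef
    have hr0 : 0 < r := by simp [hrdef]; linarith
    have hr1 : r < 1 := by simp [hrdef]; linarith
    have h0' : Tendsto (fun n => r ^ (2^n)) atTop (nhds 0) := by
      apply squeeze_zero (fun n => pow_nonneg hr0.le _)
        (fun n => pow_le_pow_of_le_one hr0.le hr1.le (Nat.lt_two_pow_self (n := n)).le)
      exact tendsto_pow_atTop_nhds_zero_of_lt_one hr0.le hr1
    have hshift : Tendsto (fun n => lmin (n+1)) atTop (nhds 1) := by
      have heq : (fun n => lmin (n+1)) = fun n => 1 - r ^ (2^n) := by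
        funext n
        have := hgeom n
        rw [hrdef] at this ⊢
        linarith
      rw [heq]
      simpa using tendsto_const_nhds.sub h0'
    exact (Filter.tendsto_add_atTop_iff_nat 1).1 hshift
end
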